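/- Let H be a real Hilbert space, let u, v ∈ H, and let t > 0 satisfy ‖v‖ ≤ t·‖u − v‖. Then for every λ ∈ [0,1], ‖(1−λ)u + λv‖² ≤ (1 − λ/(t+1))²·‖u‖² + λ·(t² + λ − 1)·‖(√t/(1+t))·u − (1/√t)·v‖². -/

import Mathlib

/-- In a real Hilbert space, if `‖v‖ ≤ t‖u - v‖` with `t > 0`, then for every
`λ ∈ [0,1]`,
`‖(1-λ)u + λv‖² ≤ (1 - λ/(t+1))²‖u‖² + λ(t² + λ - 1)‖(√t/(1+t))u - (1/√t)v‖²`. -/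
theorem stmt_1 {H : Type*} [NormedAddCommGroup H] [InnerProductSpace ℝ H] [CompleteSpace H]
    (u v : H) (t : ℝ) (ht : 0 < t) (h : ‖v‖ ≤ t * ‖u - v‖)
    (lam : ℝ) (hlam : lam ∈ Set.Icc (0 : ℝ) 1) :
    ‖(1 - lam) • u + lam • v‖ ^ 2 ≤
      (1 - lam / (t + 1)) ^ 2 * ‖u‖ ^ 2 +
        lam * (t ^ 2 + lam - 1) *
          ‖(Real.sqrt t / (1 + t)) • u - (1 / Real.sqrt t) • v‖ ^ 2 := by
  obtain ⟨hl0, hl1⟩ := hlam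
  set s := Real.sqrt t with hs
  have hspos : 0 < s := Real.sqrt_pos.mpr ht
  have hssq : s ^ 2 = t := Real.sq_sqrt ht.le
  have ht1 : (0:ℝ) < t + 1 := by linarith
  set a := ‖u‖ ^ 2 with ha
  set b := (inner ℝ u v : ℝ) with hb
  set c := ‖v‖ ^ 2 with hc
  -- squared hypothesis
  have hsq : c ≤ t ^ 2 * (a - 2 * b + c) := by
    have h2 : ‖v‖ ^ 2 ≤ (t * ‖u - v‖) ^ 2 :=
      pow_le_pow_left₀ (norm_nonneg v) h 2
    have hd : ‖u - v‖ ^ 2 = a - 2 * b + c := by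
      rw [ha, hb, hc, @norm_sub_sq_real]
    calc c = ‖v‖ ^ 2 := hc
      _ ≤ (t * ‖u - v‖) ^ 2 := h2
      _ = t ^ 2 * (a - 2 * b + c) := by rw [mul_pow, hd]
  -- expand LHS
  have hL : ‖(1 - lam) • u + lam • v‖ ^ 2 =
      (1 - lam) ^ 2 * a + 2 * (1 - lam) * lam * b + lam ^ 2 * c := by
    rw [@norm_add_sq_real, norm_smul, norm_smul, real_inner_smul_left, real_inner_smul_right,
      ha, hb, hc]
    simp only [Real.norm_eq_abs]
    rw [mul_pow, mul_pow, sq_abs, sq_abs]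
    ring
  -- expand RHS norm
  have hR : ‖(s / (1 + t)) • u - (1 / s) • v‖ ^ 2 =
      t / (1 + t) ^ 2 * a - 2 / (1 + t) * b + 1 / t * c := by
    rw [@norm_sub_sq_real, norm_smul, norm_smul, real_inner_smul_left, real_inner_smul_right,
      ha, hb, hc]
    simp only [Real.norm_eq_abs]
    rw [mul_pow, mul_pow, sq_abs, sq_abs]
    have h1 : (s / (1 + t)) ^ 2 = t / (1 + t) ^ 2 := by
      rw [div_pow, hssq]
    have h2 : (1 / s) ^ 2 = 1 / t := by
      rw [div_pow, one_pow, hssq]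
    have h3 : 2 * (s / (1 + t) * (1 / s * (inner ℝ u v : ℝ))) =
        2 / (1 + t) * (inner ℝ u v : ℝ) := by
      field_simp
    rw [h1, h2, h3]
  rw [hL, hR]
  have key : (1 - lam / (t + 1)) ^ 2 * a +
      lam * (t ^ 2 + lam - 1) * (t / (1 + t) ^ 2 * a - 2 / (1 + t) * b + 1 / t * c) -
      ((1 - lam) ^ 2 * a + 2 * (1 - lam) * lam * b + lam ^ 2 * c) =
      lam * (t + 1 - lam) / (t * (t + 1)) * (t ^ 2 * (a - 2 * b + c) - c) := by
    field_simp
    ring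
  have hcoef : 0 ≤ lam * (t + 1 - lam) / (t * (t + 1)) :=
    div_nonneg (mul_nonneg hl0 (by linarith)) (mul_pos ht ht1).le
  have hprod := mul_nonneg hcoef (by linarith : (0:ℝ) ≤ t ^ 2 * (a - 2 * b + c) - c)
  linarith [key, hprod]
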